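/- For every prime p, prime power q = p^ℓ with ℓ ≥ 1, and integer r, the prime p divides the binomial coefficient C(r-1, q-1) if and only if q does not divide r. -/

import Mathlib

open Finset in
lemma choose_neg_one_int (k : ℕ) : Ring.choose (-1 : ℤ) k = (-1) ^ k := by
  induction k with
  | zero => simp [Ring.choose_zero_right]
  | succ n ih =>
    have h := Ring.choose_succ_succ (-1 : ℤ) n
    simp only [neg_add_cancel] at h
    have h0 : Ring.choose (0 : ℤ) (n + 1) = 0 := Ring.choose_zero_succ ℤ n
    rw [h0] at h
    have : Ring.choose (-1 : ℤ) (n + 1) = -Ring.choose (-1 : ℤ) n := by linarith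
    rw [this, ih, pow_succ]
    ring

open Finset in
lemma choose_period_step (p : ℕ) (hp : p.Prime) (ℓ : ℕ) (hℓ : 1 ≤ ℓ) (q : ℕ)
    (hq : q = p ^ ℓ) (k : ℕ) (hk : k < q) (n : ℤ) :
    ((Ring.choose (n + q) k : ℤ) : ZMod p) = ((Ring.choose n k : ℤ) : ZMod p) := by
  rw [Ring.add_choose_eq k (Commute.all _ _)]
  push_cast
  rw [Finset.sum_eq_single (k, 0)]
  · simp [Ring.choose_zero_right]
  · rintro ⟨i, j⟩ hij hne
    have hij' : i + j = k := Finset.HasAntidiagonal.mem_antidiagonal.mp hij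
    have hj : j ≠ 0 := by
      rintro rfl
      exact hne (by simpa using hij')
    have hjk : j ≤ k := by omega
    have hcq : Ring.choose ((q : ℕ) : ℤ) j = (Nat.choose q j : ℤ) := Ring.choose_natCast q j
    have hdvd : p ∣ Nat.choose q j := by
      rw [hq]
      exact hp.dvd_choose_pow hj (by omega)
    have : ((Nat.choose q j : ℤ) : ZMod p) = 0 := by
      rw [ZMod.intCast_zmod_eq_zero_iff_dvd]
      exact_mod_cast hdvd
    rw [hcq, this, mul_zero]
  · intro h
    exact absurd (Finset.HasAntidiagonal.mem_antidiagonal.mpr (by omega)) h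

lemma choose_period (p : ℕ) (hp : p.Prime) (ℓ : ℕ) (hℓ : 1 ≤ ℓ) (q : ℕ)
    (hq : q = p ^ ℓ) (k : ℕ) (hk : k < q) (n : ℤ) (c : ℤ) :
    ((Ring.choose (n + c * q) k : ℤ) : ZMod p) = ((Ring.choose n k : ℤ) : ZMod p) := by
  induction c using Int.induction_on with
  | zero => simp
  | succ c ih =>
    have : n + (c + 1 : ℤ) * q = (n + c * q) + q := by ring
    rw [this, choose_period_step p hp ℓ hℓ q hq k hk, ih]
  | pred c ih =>
    have h1 : (n + (-c - 1 : ℤ) * q) + q = n + (-c : ℤ) * q := by ring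
    have := choose_period_step p hp ℓ hℓ q hq k hk (n + (-c - 1 : ℤ) * q)
    rw [h1] at this
    rw [← ih, this]

/-- For a prime `p`, a prime power `q = p ^ ℓ` (`ℓ ≥ 1`), and an integer `r`,
`p` divides the (generalized) binomial coefficient `C(r - 1, q - 1)` if and only if
`q` does not divide `r`. -/
theorem prime_dvd_choose_iff_not_dvd (p : ℕ) (hp : p.Prime) (ℓ : ℕ) (hℓ : 1 ≤ ℓ) (q : ℕ)
    (hq : q = p ^ ℓ) (r : ℤ) :
    (p : ℤ) ∣ Ring.choose (r - 1) (q - 1) ↔ ¬(q : ℤ) ∣ r := by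
  have hq2 : 2 ≤ q := by
    have : p ≤ p ^ ℓ := Nat.le_self_pow (by omega) p
    have := hp.two_le
    omega
  have hq0 : (0 : ℤ) < (q : ℤ) := by exact_mod_cast (by omega : 0 < q)
  set t : ℤ := r % q with ht
  have ht0 : 0 ≤ t := Int.emod_nonneg r (by omega)
  have htq : t < q := Int.emod_lt_of_pos r hq0
  have hr : r - 1 = (t - 1) + (r / q) * q := by
    have := Int.mul_ediv_add_emod r q
    linarith
  have hper : ((Ring.choose (r - 1) (q - 1) : ℤ) : ZMod p) =
      ((Ring.choose (t - 1) (q - 1) : ℤ) : ZMod p) := by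
    rw [hr]
    exact choose_period p hp ℓ hℓ q hq (q - 1) (by omega) (t - 1) (r / q)
  have hdvd_iff : (q : ℤ) ∣ r ↔ t = 0 := by
    exact ⟨fun hd => Int.emod_eq_zero_of_dvd hd, fun hz => Int.dvd_of_emod_eq_zero hz⟩
  rw [← ZMod.intCast_zmod_eq_zero_iff_dvd, hper]
  by_cases h : t = 0
  · rw [h]
    simp only [zero_sub]
    rw [choose_neg_one_int]
    haveI : Fact p.Prime := ⟨hp⟩
    have hne : ((((-1 : ℤ) ^ (q - 1)) : ℤ) : ZMod p) ≠ 0 := by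
      push_cast
      exact pow_ne_zero _ (neg_ne_zero.mpr one_ne_zero)
    constructor
    · intro hc
      exact absurd hc hne
    · intro hnd
      exact absurd (hdvd_iff.mpr h) hnd
  · have ht1 : 1 ≤ t := by omega
    have : t - 1 = ((t.toNat - 1 : ℕ) : ℤ) := by omega
    rw [this, Ring.choose_natCast]
    have hz : Nat.choose (t.toNat - 1) (q - 1) = 0 := by
      apply Nat.choose_eq_zero_of_lt
      omega
    rw [hz]
    simp only [Nat.cast_zero, Int.cast_zero]
    constructor
    · intro _
      intro hd
      exact h (hdvd_iff.mp hd)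
    · intro _
      trivial
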